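/- There exist a constant c₀ > 0 and M ∈ ℕ such that for all m ≥ M the following holds. Consider the two-stage instance with n = m, c = 0, A = 0, d = e (the all-ones vector of ℝ^m), uncertainty set U = conv({0, e₁, …, e_m, ν₁, …, ν_m}) where e_i are the standard basis vectors of ℝ^m and ν_i = (1/√m)(e − e_i), and random matrix B̃ with B̃_ii = 1 and B̃_ij = ũ_ij/√m for i ≠ j, where the ũ_ij (i ≠ j) are i.i.d. uniform on [0,1]. Then with probability at least 1 − 1/m, z_Aff(B̃) ≥ c₀·√m·z_AR(B̃). -/

import Mathlib

open Matrix MeasureTheory ProbabilityTheory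

/-- Optimal value of the two-stage adjustable robust problem. -/
noncomputable def zAR {m n : ℕ} (U : Set (Fin m → ℝ)) (c d : Fin n → ℝ)
    (A B : Matrix (Fin m) (Fin n) ℝ) : EReal :=
  ⨅ x : {x : Fin n → ℝ // 0 ≤ x},
    ((c ⬝ᵥ (x : Fin n → ℝ) : ℝ) : EReal) +
      ⨆ h : U,
        ⨅ _y : {y : Fin n → ℝ // 0 ≤ y ∧
            (h : Fin m → ℝ) ≤ A *ᵥ (x : Fin n → ℝ) + B *ᵥ y},
          ((d ⬝ᵥ (_y : Fin n → ℝ) : ℝ) : EReal)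

/-- Optimal value of the affine-policy problem. -/
noncomputable def zAff {m n : ℕ} (U : Set (Fin m → ℝ)) (c d : Fin n → ℝ)
    (A B : Matrix (Fin m) (Fin n) ℝ) : EReal :=
  ⨅ p : {p : (Fin n → ℝ) × Matrix (Fin n) (Fin m) ℝ × (Fin n → ℝ) //
      0 ≤ p.1 ∧ ∀ h ∈ U, 0 ≤ p.2.1 *ᵥ h + p.2.2 ∧
        h ≤ A *ᵥ p.1 + B *ᵥ (p.2.1 *ᵥ h + p.2.2)},
    ((c ⬝ᵥ p.1.1 : ℝ) : EReal) +
      ⨆ h : U, ((d ⬝ᵥ (p.1.2.1 *ᵥ (h : Fin m → ℝ) + p.1.2.2) : ℝ) : EReal)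

/-- The polyhedral uncertainty set. -/
def polyU {m L : ℕ} (R : Matrix (Fin L) (Fin m) ℝ) (r : Fin L → ℝ) : Set (Fin m → ℝ) :=
  {h | 0 ≤ h ∧ R *ᵥ h ≤ r}

/-- The dualized uncertainty set. -/
def dualW {m n : ℕ} (B : Matrix (Fin m) (Fin n) ℝ) (d : Fin n → ℝ) : Set (Fin m → ℝ) :=
  {w | 0 ≤ w ∧ Bᵀ *ᵥ w ≤ d}

/-- Optimal value of the dualized adjustable robust problem. -/
noncomputable def zdAR {m n L : ℕ} (c d : Fin n → ℝ) (A B : Matrix (Fin m) (Fin n) ℝ)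
    (R : Matrix (Fin L) (Fin m) ℝ) (r : Fin L → ℝ) : EReal :=
  ⨅ x : {x : Fin n → ℝ // 0 ≤ x},
    ((c ⬝ᵥ (x : Fin n → ℝ) : ℝ) : EReal) +
      ⨆ w : dualW B d,
        ⨅ l : {l : Fin L → ℝ // 0 ≤ l ∧ (w : Fin m → ℝ) ≤ Rᵀ *ᵥ l},
          ((-(A *ᵥ (x : Fin n → ℝ)) ⬝ᵥ (w : Fin m → ℝ) + r ⬝ᵥ (l : Fin L → ℝ) : ℝ) : EReal)

/-- Optimal value of the dualized affine-policy problem. -/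
noncomputable def zdAff {m n L : ℕ} (c d : Fin n → ℝ) (A B : Matrix (Fin m) (Fin n) ℝ)
    (R : Matrix (Fin L) (Fin m) ℝ) (r : Fin L → ℝ) : EReal :=
  ⨅ p : {p : (Fin n → ℝ) × Matrix (Fin L) (Fin m) ℝ × (Fin L → ℝ) //
      0 ≤ p.1 ∧ ∀ w ∈ dualW B d, 0 ≤ p.2.1 *ᵥ w + p.2.2 ∧
        w ≤ Rᵀ *ᵥ (p.2.1 *ᵥ w + p.2.2)},
    ((c ⬝ᵥ p.1.1 : ℝ) : EReal) +
      ⨆ w : dualW B d,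
        ((-(A *ᵥ p.1.1) ⬝ᵥ (w : Fin m → ℝ) + r ⬝ᵥ (p.1.2.1 *ᵥ (w : Fin m → ℝ) + p.1.2.2) : ℝ) : EReal)
/-- The uncertainty set of the worst-case instance:
`U = conv{0, e₁, …, e_m, ν₁, …, ν_m}` with `νᵢ = (1/√m)(e - eᵢ)`. -/
noncomputable def badU (m : ℕ) : Set (Fin m → ℝ) :=
  convexHull ℝ (insert 0
    (Set.range (fun i : Fin m => (Pi.single i 1 : Fin m → ℝ)) ∪
      Set.range (fun i : Fin m => (Real.sqrt m)⁻¹ • ((1 : Fin m → ℝ) - Pi.single i 1))))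

/-- The worst-case recourse matrix: `B_ii = 1`, `B_ij = 1/√m` for `i ≠ j`. -/
noncomputable def badB (m : ℕ) : Matrix (Fin m) (Fin m) ℝ :=
  Matrix.of fun i j => if i = j then (1 : ℝ) else 1 / Real.sqrt m

/-- The random perturbed worst-case matrix: `B̃_ii = 1`, `B̃_ij = ũ_ij/√m` for `i ≠ j`. -/
noncomputable def badBrand (m : ℕ) {Ω : Type} (u : Fin m → Fin m → Ω → ℝ) (ω : Ω) :
    Matrix (Fin m) (Fin m) ℝ :=
  Matrix.of fun i j => if i = j then (1 : ℝ) else u i j ω / Real.sqrt m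

open Finset Real in
lemma badU_subset_T {m : ℕ} (hm : 1 ≤ m) (B : Matrix (Fin m) (Fin m) ℝ)
    (hBd : ∀ i, B i i = 1) (hB0 : ∀ i j, 0 ≤ B i j)
    (hrow : ∀ k, Real.sqrt m / 4 ≤ ∑ j ∈ Finset.univ.erase k, B k j) :
    badU m ⊆ {h : Fin m → ℝ | ∃ y : Fin m → ℝ, 0 ≤ y ∧ h ≤ B *ᵥ y ∧ ∑ j, y j ≤ 4} := by
  have hm0 : (0:ℝ) < m := by exact_mod_cast Nat.lt_of_lt_of_le Nat.zero_lt_one hm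
  have hsq0 : 0 < Real.sqrt m := Real.sqrt_pos.mpr hm0
  have hconv : Convex ℝ {h : Fin m → ℝ | ∃ y : Fin m → ℝ, 0 ≤ y ∧ h ≤ B *ᵥ y ∧ ∑ j, y j ≤ 4} := by
    rintro h1 ⟨y1, hy1, hh1, hs1⟩ h2 ⟨y2, hy2, hh2, hs2⟩ a b ha hb hab
    refine ⟨a • y1 + b • y2, ?_, ?_, ?_⟩
    · exact add_nonneg (smul_nonneg ha hy1) (smul_nonneg hb hy2)
    · intro k
      have e : B *ᵥ (a • y1 + b • y2) = a • (B *ᵥ y1) + b • (B *ᵥ y2) := by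
        rw [Matrix.mulVec_add, Matrix.mulVec_smul, Matrix.mulVec_smul]
      rw [e]
      simp only [Pi.add_apply, Pi.smul_apply, smul_eq_mul]
      exact add_le_add (mul_le_mul_of_nonneg_left (hh1 k) ha)
        (mul_le_mul_of_nonneg_left (hh2 k) hb)
    · simp only [Pi.add_apply, Pi.smul_apply, smul_eq_mul]
      rw [Finset.sum_add_distrib, ← Finset.mul_sum, ← Finset.mul_sum]
      calc a * ∑ j, y1 j + b * ∑ j, y2 j ≤ a * 4 + b * 4 := by
            exact add_le_add (mul_le_mul_of_nonneg_left hs1 ha)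
              (mul_le_mul_of_nonneg_left hs2 hb)
        _ = 4 := by rw [← add_mul, hab, one_mul]
  refine convexHull_min ?_ hconv
  rintro h (rfl | ⟨i, rfl⟩ | ⟨i, rfl⟩)
  · exact ⟨0, le_rfl, by simp [Matrix.mulVec_zero], by simp⟩
  · refine ⟨Pi.single i 1, ?_, ?_, ?_⟩
    · intro k; by_cases hk : k = i <;> simp [Pi.single_apply, hk]
    · intro k
      rw [Matrix.mulVec_single]
      by_cases hk : k = i
      · subst hk; simp [Pi.single_eq_same, hBd]
      · simp only [Pi.single_apply, hk, if_false, mul_one]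
        simpa using hB0 k i
    · rw [Finset.sum_pi_single']
      simp
  · refine ⟨(fun _ => 4 / m), ?_, ?_, ?_⟩
    · intro k; positivity
    · intro k
      have hBk : Real.sqrt m / 4 ≤ ∑ j, B k j := by
        refine le_trans (hrow k) (Finset.sum_le_sum_of_subset_of_nonneg
          (Finset.erase_subset _ _) (fun j _ _ => hB0 k j))
      have hmul : (B *ᵥ fun _ => 4 / (m:ℝ)) k = (∑ j, B k j) * (4 / m) := by
        simp [Matrix.mulVec, dotProduct, Finset.sum_mul]
      rw [hmul]
      have hcoord : ((Real.sqrt m)⁻¹ • ((1 : Fin m → ℝ) - (Pi.single i 1 : Fin m → ℝ))) k ≤ (Real.sqrt m)⁻¹ := by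
        simp only [Pi.smul_apply, Pi.sub_apply, Pi.one_apply, smul_eq_mul]
        by_cases hk : k = i <;> simp [Pi.single_apply, hk] <;> positivity
      refine le_trans hcoord ?_
      have h1 : (Real.sqrt m)⁻¹ = Real.sqrt m / 4 * (4 / m) := by
        rw [eq_comm, inv_eq_one_div, div_mul_div_comm,
          div_eq_div_iff (by positivity) (by positivity)]
        linear_combination 4 * Real.mul_self_sqrt hm0.le
      rw [h1]
      exact mul_le_mul_of_nonneg_right hBk (by positivity)
    · rw [Finset.sum_const, Finset.card_univ, Fintype.card_fin, nsmul_eq_mul]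
      have hne : (m:ℝ) ≠ 0 := hm0.ne'
      field_simp
      norm_num

lemma zero_mem_badU (m : ℕ) : (0 : Fin m → ℝ) ∈ badU m :=
  subset_convexHull ℝ _ (Set.mem_insert _ _)

lemma single_mem_badU {m : ℕ} (j : Fin m) : (Pi.single j 1 : Fin m → ℝ) ∈ badU m :=
  subset_convexHull ℝ _ (Set.mem_insert_of_mem _ (Or.inl ⟨j, rfl⟩))

lemma nu_mem_badU {m : ℕ} (i : Fin m) :
    (Real.sqrt m)⁻¹ • ((1 : Fin m → ℝ) - Pi.single i 1) ∈ badU m :=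
  subset_convexHull ℝ _ (Set.mem_insert_of_mem _ (Or.inr ⟨i, rfl⟩))

lemma zAR_nonneg {m : ℕ} (B : Matrix (Fin m) (Fin m) ℝ) :
    (0 : EReal) ≤ zAR (badU m) (0 : Fin m → ℝ) (fun _ => (1 : ℝ)) 0 B := by
  refine le_iInf fun x => ?_
  rw [zero_dotProduct, EReal.coe_zero, zero_add]
  refine le_iSup_of_le ⟨0, zero_mem_badU m⟩ (le_iInf fun y => ?_)
  refine EReal.coe_nonneg.mpr ?_
  have hy := y.2.1
  simp only [dotProduct, one_mul]
  exact Finset.sum_nonneg fun j _ => hy j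

lemma zAR_le_four {m : ℕ} (hm : 1 ≤ m) (B : Matrix (Fin m) (Fin m) ℝ)
    (hsub : badU m ⊆ {h : Fin m → ℝ | ∃ y : Fin m → ℝ, 0 ≤ y ∧ h ≤ B *ᵥ y ∧ ∑ j, y j ≤ 4}) :
    zAR (badU m) (0 : Fin m → ℝ) (fun _ => (1 : ℝ)) 0 B ≤ ((4 : ℝ) : EReal) := by
  refine iInf_le_of_le ⟨0, le_rfl⟩ ?_
  rw [zero_dotProduct, EReal.coe_zero, zero_add]
  refine iSup_le fun h => ?_
  obtain ⟨y, hy0, hyle, hysum⟩ := hsub h.2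
  refine iInf_le_of_le ⟨y, hy0, ?_⟩ ?_
  · rw [Matrix.mulVec_zero, zero_add]; exact hyle
  · refine EReal.coe_le_coe_iff.mpr ?_
    simpa only [dotProduct, one_mul] using hysum

lemma exists_expensive_scenario {m : ℕ} (hm : 16 ≤ m) (B : Matrix (Fin m) (Fin m) ℝ)
    (hBd : ∀ i, B i i = 1) (hBub : ∀ i j, i ≠ j → B i j ≤ (Real.sqrt m)⁻¹)
    (P : Matrix (Fin m) (Fin m) ℝ) (q : Fin m → ℝ)
    (hfeas : ∀ h ∈ badU m, 0 ≤ P *ᵥ h + q ∧ h ≤ B *ᵥ (P *ᵥ h + q)) :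
    ∃ h ∈ badU m, Real.sqrt m / 4 ≤ ∑ k, (P *ᵥ h + q) k := by
  classical
  by_contra hcon
  push_neg at hcon
  have hm0 : (0:ℝ) < m := by
    have : (16:ℝ) ≤ m := by exact_mod_cast hm
    linarith
  set sq : ℝ := Real.sqrt m with hsqdef
  have hsq0 : 0 < sq := Real.sqrt_pos.mpr hm0
  have hsqm : sq * sq = m := Real.mul_self_sqrt hm0.le
  have hsq4 : 4 ≤ sq := by
    nlinarith [hsqm, hsq0, (show (16:ℝ) ≤ m by exact_mod_cast hm)]
  set s : ℝ := sq⁻¹ with hsdef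
  have hs0 : 0 < s := inv_pos.mpr hsq0
  have hssq : s * sq = 1 := inv_mul_cancel₀ hsq0.ne'
  have hs14 : s ≤ 1/4 := by nlinarith
  -- scenario h = 0
  have h0 := hfeas 0 (zero_mem_badU m)
  have hq0 : ∀ k, 0 ≤ q k := by
    intro k
    have := h0.1 k
    simpa [Matrix.mulVec_zero] using this
  have ht : (∑ k, q k) < sq / 4 := by
    have := hcon 0 (zero_mem_badU m)
    simpa [Matrix.mulVec_zero] using this
  -- scenarios h = e j
  have hy0 : ∀ j k, 0 ≤ P k j + q k := by
    intro j k
    have := (hfeas _ (single_mem_badU j)).1 k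
    simpa [Matrix.mulVec_single] using this
  have hE : ∀ j, (∑ k, (P k j + q k)) < sq / 4 := by
    intro j
    have := hcon _ (single_mem_badU j)
    simpa [Matrix.mulVec_single] using this
  have hB1 : ∀ j, 1 ≤ ∑ l, B j l * (P l j + q l) := by
    intro j
    have := (hfeas _ (single_mem_badU j)).2 j
    simpa [Matrix.mulVec, dotProduct, Matrix.mulVec_single, Pi.add_apply,
      Pi.single_eq_same] using this
  -- scenarios h = nu i
  have hnu : ∀ i k, (P *ᵥ ((Real.sqrt m)⁻¹ • ((1 : Fin m → ℝ) - Pi.single i 1)) + q) k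
      = s * ((∑ j, P k j) - P k i) + q k := by
    intro i k
    rw [Matrix.mulVec_smul, Matrix.mulVec_sub]
    simp only [Pi.add_apply, Pi.smul_apply, Pi.sub_apply, smul_eq_mul,
      Matrix.mulVec_single, mul_one, op_smul_eq_mul, Matrix.col_apply]
    have h1 : (P *ᵥ (1 : Fin m → ℝ)) k = ∑ j, P k j := by
      simp [Matrix.mulVec, dotProduct]
    rw [h1, ← hsqdef, ← hsdef]
  have hw0 : ∀ i, 0 ≤ s * ((∑ j, P i j) - P i i) + q i := by
    intro i
    have := (hfeas _ (nu_mem_badU i)).1 i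
    rw [hnu i i] at this
    exact this
  have hF : ∀ i, (∑ k, (s * ((∑ j, P k j) - P k i) + q k)) < sq / 4 := by
    intro i
    have := hcon _ (nu_mem_badU i)
    refine lt_of_le_of_lt (le_of_eq ?_) this
    exact (Finset.sum_congr rfl fun k _ => (hnu i k).symm)
  -- derived quantities
  set t : ℝ := ∑ k, q k with htdef
  set T : ℝ := ∑ k, ∑ j, P k j with hTdef
  set tr : ℝ := ∑ j, P j j with htrdef
  have ht0 : 0 ≤ t := Finset.sum_nonneg fun k _ => hq0 k
  -- step A : per-column bound from scenario e j
  have hA : ∀ j, 1 ≤ (P j j + q j) + s * ∑ k, (P k j + q k) := by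
    intro j
    have h2 : ∑ l, B j l * (P l j + q l)
        ≤ (P j j + q j) + s * ∑ l ∈ Finset.univ.erase j, (P l j + q l) := by
      rw [← Finset.add_sum_erase _ _ (Finset.mem_univ j), hBd j, one_mul, Finset.mul_sum]
      exact add_le_add_right (Finset.sum_le_sum fun l hl =>
        mul_le_mul_of_nonneg_right (hBub j l (Ne.symm (Finset.mem_erase.mp hl).1))
          (hy0 j l)) _
    have h3 : ∑ l ∈ Finset.univ.erase j, (P l j + q l) ≤ ∑ l, (P l j + q l) :=
      Finset.sum_le_sum_of_subset_of_nonneg (Finset.erase_subset _ _)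
        (fun l _ _ => hy0 j l)
    have h4 := mul_le_mul_of_nonneg_left h3 hs0.le
    linarith [hB1 j]
  -- sum of step A over all j
  have h8 : ∑ j : Fin m, ∑ k, (P k j + q k) = T + (m:ℝ) * t := by
    rw [Finset.sum_congr rfl (fun j (_ : j ∈ Finset.univ) =>
      (Finset.sum_add_distrib : ∑ k, (P k j + q k) = _))]
    rw [Finset.sum_add_distrib, Finset.sum_const, Finset.card_univ, Fintype.card_fin,
      nsmul_eq_mul, hTdef]
    rw [Finset.sum_comm]
  have hAsum : (m:ℝ) ≤ tr + t + s * (T + (m:ℝ) * t) := by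
    have h5 : ∑ j : Fin m, (1:ℝ) ≤ ∑ j, ((P j j + q j) + s * ∑ k, (P k j + q k)) :=
      Finset.sum_le_sum fun j _ => hA j
    have h6 : ∑ j : Fin m, (1:ℝ) = (m:ℝ) := by
      rw [Finset.sum_const, Finset.card_univ, Fintype.card_fin, nsmul_eq_mul, mul_one]
    have h7 : ∑ j, ((P j j + q j) + s * ∑ k, (P k j + q k))
        = tr + t + s * (T + (m:ℝ) * t) := by
      rw [Finset.sum_add_distrib, Finset.sum_add_distrib, ← Finset.mul_sum, h8,
        htrdef, htdef]
    linarith [h5, h6.symm.le, h7.le]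
  -- step C : sum of nonnegativity of w_i at coordinate i
  have hC : 0 ≤ s * (T - tr) + t := by
    have h9 : (0:ℝ) ≤ ∑ i, (s * ((∑ j, P i j) - P i i) + q i) :=
      Finset.sum_nonneg fun i _ => hw0 i
    have h10 : ∑ i, (s * ((∑ j, P i j) - P i i) + q i) = s * (T - tr) + t := by
      rw [Finset.sum_add_distrib, ← Finset.mul_sum, Finset.sum_sub_distrib,
        htdef, hTdef, htrdef]
    linarith [h9, h10]
  -- step D : the fixed scenario nu i0 and e i0
  have hmpos : 0 < m := by omega
  set i0 : Fin m := ⟨0, hmpos⟩ with hi0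
  set CS : ℝ := ∑ k, P k i0 with hCSdef
  have hD1 : s * (T - CS) + t < sq / 4 := by
    have h11 := hF i0
    have h12 : ∑ k, (s * ((∑ j, P k j) - P k i0) + q k) = s * (T - CS) + t := by
      rw [Finset.sum_add_distrib, ← Finset.mul_sum, Finset.sum_sub_distrib,
        htdef, hTdef, hCSdef]
    linarith [h11, h12]
  have hD2 : CS + t < sq / 4 := by
    have h13 := hE i0
    have h14 : ∑ k, (P k i0 + q k) = CS + t := by
      rw [Finset.sum_add_distrib, htdef, hCSdef]
    linarith [h13, h14]
  -- final contradiction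
  rw [← hsqm] at hAsum
  have e1 := mul_le_mul_of_nonneg_left hAsum hs0.le
  have e5 := mul_le_mul_of_nonneg_left hD2.le hs0.le
  have e6 : s * T ≤ sq/4 + 1/4 - t - s*t := by nlinarith [hD1, e5, hssq]
  have e7 := mul_le_mul_of_nonneg_left e6 hs0.le
  have hst : 0 ≤ s * t := mul_nonneg hs0.le ht0
  have hsst : 0 ≤ s * (s * t) := mul_nonneg hs0.le hst
  have k1 : s * (s * (sq * sq * t)) = t := by
    rw [show s * (s * (sq * sq * t)) = (s * sq) * ((s * sq) * t) by ring, hssq,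
      one_mul, one_mul]
  have k2 : s * (sq * sq) = sq := by rw [← mul_assoc, hssq, one_mul]
  nlinarith [e1, hC, e6, e7, ht, ht0, hst, hsst, k1, k2, hssq, hs14, hsq4, hs0.le]

lemma zAff_ge {m : ℕ} (hm : 16 ≤ m) (B : Matrix (Fin m) (Fin m) ℝ)
    (hBd : ∀ i, B i i = 1) (hBub : ∀ i j, i ≠ j → B i j ≤ (Real.sqrt m)⁻¹) :
    ((Real.sqrt m / 4 : ℝ) : EReal) ≤ zAff (badU m) (0 : Fin m → ℝ) (fun _ => (1:ℝ)) 0 B := by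
  refine le_iInf fun p => ?_
  have hfeas : ∀ h ∈ badU m, 0 ≤ p.1.2.1 *ᵥ h + p.1.2.2 ∧
      h ≤ B *ᵥ (p.1.2.1 *ᵥ h + p.1.2.2) := by
    intro h hh
    have h2 := p.2.2 h hh
    refine ⟨h2.1, ?_⟩
    have := h2.2
    rwa [Matrix.zero_mulVec, zero_add] at this
  obtain ⟨h, hhU, hcost⟩ := exists_expensive_scenario hm B hBd hBub _ _ hfeas
  rw [zero_dotProduct, EReal.coe_zero, zero_add]
  refine le_iSup_of_le ⟨h, hhU⟩ ?_
  refine EReal.coe_le_coe_iff.mpr ?_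
  simpa [dotProduct, one_mul] using hcost

lemma deterministic_bound {m : ℕ} (hm : 16 ≤ m) (B : Matrix (Fin m) (Fin m) ℝ)
    (hBd : ∀ i, B i i = 1) (hB0 : ∀ i j, 0 ≤ B i j)
    (hBub : ∀ i j, i ≠ j → B i j ≤ (Real.sqrt m)⁻¹)
    (hrow : ∀ k, Real.sqrt m / 4 ≤ ∑ j ∈ Finset.univ.erase k, B k j) :
    ((1/16 * Real.sqrt m : ℝ) : EReal) *
        zAR (badU m) (0 : Fin m → ℝ) (fun _ => (1:ℝ)) 0 B ≤
      zAff (badU m) (0 : Fin m → ℝ) (fun _ => (1:ℝ)) 0 B := by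
  have h4 := zAR_le_four (by omega) B (badU_subset_T (by omega) B hBd hB0 hrow)
  have h0 := zAR_nonneg B
  have hAff := zAff_ge hm B hBd hBub
  set r : EReal := zAR (badU m) (0 : Fin m → ℝ) (fun _ => (1:ℝ)) 0 B with hr
  have hrne : r ≠ ⊤ := (h4.trans_lt (EReal.coe_lt_top 4)).ne
  have hrnb : r ≠ ⊥ := ((EReal.bot_lt_zero).trans_le h0).ne'
  have hrc : r = ((r.toReal : ℝ) : EReal) := (EReal.coe_toReal hrne hrnb).symm
  rw [hrc, ← EReal.coe_mul]
  refine le_trans ?_ hAff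
  refine EReal.coe_le_coe_iff.mpr ?_
  have hr4 : r.toReal ≤ 4 := by
    have := EReal.toReal_le_toReal h4 hrnb (EReal.coe_ne_top 4)
    simpa using this
  have hr0 : 0 ≤ r.toReal := by
    have := EReal.toReal_le_toReal h0 (by simp) hrne
    simpa using this
  nlinarith [Real.sqrt_nonneg (m:ℝ)]

lemma sum_pairs {m : ℕ} (k : Fin m) (f : Fin m → Fin m → ℝ) :
    ∑ p ∈ Finset.univ.filter
        (fun p : {p : Fin m × Fin m // p.1 ≠ p.2} => p.1.1 = k), f p.1.1 p.1.2
      = ∑ j ∈ Finset.univ.erase k, f k j := by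
  refine Finset.sum_bij' (fun p _ => p.1.2)
    (fun j hj => ⟨(k, j), fun hc => (Finset.mem_erase.mp hj).1 hc.symm⟩)
    ?_ ?_ ?_ ?_ ?_
  · intro p hp
    simp only [Finset.mem_filter, Finset.mem_univ, true_and] at hp
    simp only [Finset.mem_erase, Finset.mem_univ, and_true]
    exact fun hc => p.2 (hp.trans hc.symm)
  · intro j hj
    simp only [Finset.mem_filter, Finset.mem_univ, true_and]
  · intro p hp
    simp only [Finset.mem_filter, Finset.mem_univ, true_and] at hp
    refine Subtype.ext ?_
    show (k, (p : Fin m × Fin m).2) = (p : Fin m × Fin m)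
    rw [← hp]
  · intro j hj
    rfl
  · intro p hp
    simp only [Finset.mem_filter, Finset.mem_univ, true_and] at hp
    rw [hp]

lemma card_pairs {m : ℕ} (k : Fin m) :
    (Finset.univ.filter
        (fun p : {p : Fin m × Fin m // p.1 ≠ p.2} => p.1.1 = k)).card = m - 1 := by
  have h := sum_pairs k (fun _ _ => (1:ℝ))
  rw [Finset.sum_const, Finset.sum_const, nsmul_eq_mul, nsmul_eq_mul, mul_one, mul_one] at h
  have h2 : (Finset.univ.filter
      (fun p : {p : Fin m × Fin m // p.1 ≠ p.2} => p.1.1 = k)).card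
      = (Finset.univ.erase k).card := Nat.cast_inj.mp h
  rw [h2, Finset.card_erase_of_mem (Finset.mem_univ k), Finset.card_univ, Fintype.card_fin]

-- the exponential integral
lemma exp_integral_Icc : ∫ x in Set.Icc (0:ℝ) 1, Real.exp (-4 * x) = (1 - Real.exp (-4))/4 := by
  rw [MeasureTheory.integral_Icc_eq_integral_Ioc, ← intervalIntegral.integral_of_le zero_le_one]
  have hderiv : ∀ x ∈ Set.uIcc (0:ℝ) 1, HasDerivAt (fun y => -Real.exp (-4 * y)/4)
      (Real.exp (-4 * x)) x := by
    intro x _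
    have h1 : HasDerivAt (fun y : ℝ => -4 * y) (-4) x := by
      simpa using (hasDerivAt_id x).const_mul (-4)
    have h2 := h1.exp
    have h3 := h2.div_const (4:ℝ)
    have h4 : HasDerivAt (fun y => -(Real.exp (-4 * y) / 4)) (-(Real.exp (-4 * x) * -4 / 4)) x := h3.neg
    convert h4 using 1
    · ext y; ring
    · ring
  rw [intervalIntegral.integral_eq_sub_of_hasDerivAt hderiv
    ((Continuous.intervalIntegrable (by continuity) _ _))]
  simp only [mul_one, mul_zero, Real.exp_zero]
  ring

lemma chernoff_tail {m : ℕ} {Ω : Type} [MeasurableSpace Ω] (Pr : Measure Ω)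
    [IsProbabilityMeasure Pr] (u : Fin m → Fin m → Ω → ℝ)
    (hmeas : ∀ i j, i ≠ j → Measurable (u i j))
    (hindep : iIndepFun
      (fun p : {p : Fin m × Fin m // p.1 ≠ p.2} => u p.1.1 p.1.2) Pr)
    (hmap : ∀ i j, i ≠ j → Measure.map (u i j) Pr = volume.restrict (Set.Icc (0 : ℝ) 1))
    (k : Fin m) :
    Pr {ω | ∑ j ∈ Finset.univ.erase k, u k j ω ≤ (m:ℝ)/4}
      ≤ ENNReal.ofReal (Real.exp m * (1/4 : ℝ)^(m-1)) := by
  classical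
  set X : {p : Fin m × Fin m // p.1 ≠ p.2} → Ω → ℝ := fun p => u p.1.1 p.1.2 with hX
  have hXmeas : ∀ p, Measurable (X p) := fun p => hmeas _ _ p.2
  set Fk : Finset {p : Fin m × Fin m // p.1 ≠ p.2} :=
    Finset.univ.filter (fun p => p.1.1 = k) with hFk
  -- a.e. bounds on each X p
  have hae : ∀ p : {p : Fin m × Fin m // p.1 ≠ p.2}, ∀ᵐ ω ∂Pr, X p ω ∈ Set.Icc (0:ℝ) 1 := by
    intro p
    have hnull : Pr (X p ⁻¹' (Set.Icc (0:ℝ) 1)ᶜ) = 0 := by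
      rw [← Measure.map_apply (hXmeas p) (measurableSet_Icc.compl), hmap _ _ p.2,
        Measure.restrict_apply measurableSet_Icc.compl, Set.compl_inter_self,
        measure_empty]
    rw [MeasureTheory.ae_iff]
    exact hnull
  -- each factor is integrable
  have hint : ∀ p : {p : Fin m × Fin m // p.1 ≠ p.2},
      Integrable (fun ω => Real.exp (-4 * X p ω)) Pr := by
    intro p
    refine Integrable.mono' (integrable_const (1:ℝ))
      (((hXmeas p).const_mul (-4)).exp.aestronglyMeasurable) ?_
    filter_upwards [hae p] with ω hω
    rw [Real.norm_eq_abs, abs_of_pos (Real.exp_pos _)]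
    exact Real.exp_le_one_iff.mpr (by nlinarith [hω.1])
  have hintsum : Integrable (fun ω => Real.exp (-4 * (∑ p ∈ Fk, X p) ω)) Pr :=
    hindep.integrable_exp_mul_sum hXmeas (fun p _ => hint p)
  -- Chernoff
  have hcher := measure_le_le_exp_mul_mgf (X := ∑ p ∈ Fk, X p) (μ := Pr) ((m:ℝ)/4)
    (by norm_num : (-4:ℝ) ≤ 0) hintsum
  -- mgf of each factor
  have hmgf : ∀ p ∈ Fk, mgf (X p) Pr (-4) ≤ 1/4 := by
    intro p _
    have : mgf (X p) Pr (-4) = ∫ x in Set.Icc (0:ℝ) 1, Real.exp (-4 * x) := by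
      rw [mgf, ← hmap _ _ p.2]
      exact (integral_map (hXmeas p).aemeasurable
        (Real.continuous_exp.comp (continuous_const.mul continuous_id)).aestronglyMeasurable).symm
    rw [this, exp_integral_Icc]
    nlinarith [Real.exp_pos (-4:ℝ)]
  have hprod : mgf (∑ p ∈ Fk, X p) Pr (-4) ≤ (1/4:ℝ)^(m-1) := by
    rw [hindep.mgf_sum hXmeas Fk]
    calc ∏ p ∈ Fk, mgf (X p) Pr (-4) ≤ ∏ p ∈ Fk, (1/4:ℝ) :=
          Finset.prod_le_prod (fun p _ => mgf_nonneg) hmgf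
      _ = (1/4:ℝ)^(m-1) := by rw [Finset.prod_const, card_pairs]
  -- assemble
  have hbound : (Pr {ω | (∑ p ∈ Fk, X p) ω ≤ (m:ℝ)/4}).toReal
      ≤ Real.exp m * (1/4:ℝ)^(m-1) := by
    refine le_trans hcher ?_
    have he : Real.exp (-(-4) * ((m:ℝ)/4)) = Real.exp m := by rw [neg_neg]; congr 1; ring
    rw [he]
    exact mul_le_mul_of_nonneg_left hprod (Real.exp_pos _).le
  have hsets : {ω | ∑ j ∈ Finset.univ.erase k, u k j ω ≤ (m:ℝ)/4}
      = {ω | (∑ p ∈ Fk, X p) ω ≤ (m:ℝ)/4} := by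
    ext ω
    simp only [Set.mem_setOf_eq, Finset.sum_apply]
    rw [hX, hFk, sum_pairs k (fun i j => u i j ω)]
  rw [hsets]
  calc Pr {ω | (∑ p ∈ Fk, X p) ω ≤ (m:ℝ)/4}
      = ENNReal.ofReal ((Pr {ω | (∑ p ∈ Fk, X p) ω ≤ (m:ℝ)/4}).toReal) :=
        (ENNReal.ofReal_toReal (measure_ne_top _ _)).symm
    _ ≤ ENNReal.ofReal (Real.exp m * (1/4:ℝ)^(m-1)) := ENNReal.ofReal_le_ofReal hbound

lemma nat_pow_bound : ∀ m : ℕ, 64 ≤ m → 4 * m^2 * 3^m ≤ 4^m := by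
  intro m hm
  induction m, hm using Nat.le_induction with
  | base => norm_num
  | succ n hn ih =>
    have h3 : 3*(n+1)^2 ≤ 4*n^2 := by nlinarith
    calc 4*(n+1)^2*3^(n+1) = (3*(n+1)^2)*(4*3^n) := by ring
      _ ≤ (4*n^2)*(4*3^n) := Nat.mul_le_mul_right _ h3
      _ = 4*(4*n^2*3^n) := by ring
      _ ≤ 4*4^n := Nat.mul_le_mul_left _ ih
      _ = 4^(n+1) := by ring

lemma num_bound {m : ℕ} (hm : 64 ≤ m) :
    (m:ℝ) * (Real.exp m * (1/4:ℝ)^(m-1)) ≤ 1/m := by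
  have hm0 : 0 < m := by omega
  have hm0' : (0:ℝ) < m := by exact_mod_cast hm0
  have hexp : Real.exp m ≤ (3:ℝ)^m := by
    rw [show ((m:ℝ)) = (m:ℝ) * 1 by ring, Real.exp_nat_mul]
    exact pow_le_pow_left₀ (Real.exp_pos 1).le
      (le_trans Real.exp_one_lt_d9.le (by norm_num)) m
  have hq : (1/4:ℝ)^(m-1) = 4 * (1/4:ℝ)^m := by
    have h2 : (1/4:ℝ)^m = (1/4:ℝ)^(m-1) * (1/4) := by
      rw [← pow_succ]
      congr 1
      omega
    rw [h2]; ring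
  have hkey : 4 * (m:ℝ)^2 * (3:ℝ)^m ≤ (4:ℝ)^m := by exact_mod_cast nat_pow_bound m hm
  have h4m : (0:ℝ) < 4^m := by positivity
  rw [hq, le_div_iff₀ hm0']
  have heq : (m:ℝ) * (Real.exp m * (4 * (1/4:ℝ)^m)) * m
      = (4*(m:ℝ)^2*Real.exp m) * ((1/4:ℝ)^m) := by ring
  rw [heq]
  have h14 : (1/4:ℝ)^m = ((4:ℝ)^m)⁻¹ := by
    rw [one_div, inv_pow]
  rw [h14, ← div_eq_mul_inv, div_le_one h4m]
  calc 4*(m:ℝ)^2*Real.exp m ≤ 4*(m:ℝ)^2*(3:ℝ)^m :=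
        mul_le_mul_of_nonneg_left hexp (by positivity)
    _ ≤ (4:ℝ)^m := hkey


theorem affine_bad_random_instance :
    ∃ c₀ : ℝ, 0 < c₀ ∧ ∃ M : ℕ, ∀ m : ℕ, M ≤ m →
      ∀ (Ω : Type) [MeasurableSpace Ω] (Pr : Measure Ω) [IsProbabilityMeasure Pr]
        (u : Fin m → Fin m → Ω → ℝ),
        (∀ i j, i ≠ j → Measurable (u i j)) →
        iIndepFun
          (fun p : {p : Fin m × Fin m // p.1 ≠ p.2} => u p.1.1 p.1.2) Pr →
        (∀ i j, i ≠ j → Measure.map (u i j) Pr = volume.restrict (Set.Icc (0 : ℝ) 1)) →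
        ENNReal.ofReal (1 - 1 / m) ≤
          Pr {ω | ((c₀ * Real.sqrt m : ℝ) : EReal) *
                zAR (badU m) (0 : Fin m → ℝ) (fun _ => (1 : ℝ)) 0 (badBrand m u ω) ≤
              zAff (badU m) (0 : Fin m → ℝ) (fun _ => (1 : ℝ)) 0 (badBrand m u ω)} := by
  classical
  refine ⟨1/16, by norm_num, 64, ?_⟩
  intro m hm Ω _ Pr _ u hmeas hindep hmap
  have hm0 : 0 < m := by omega
  have hmr : (0:ℝ) < m := by exact_mod_cast hm0
  have hsq0 : 0 < Real.sqrt m := Real.sqrt_pos.mpr hmr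
  -- the good event
  set G1 : Set Ω := ⋂ (i : Fin m), ⋂ (j : Fin m), ⋂ (_ : i ≠ j),
    u i j ⁻¹' (Set.Icc (0:ℝ) 1) with hG1
  set G2 : Set Ω := ⋂ (k : Fin m),
    {ω : Ω | (m:ℝ)/4 ≤ ∑ j ∈ Finset.univ.erase k, u k j ω} with hG2
  -- the good event implies the bound
  have hsub : G1 ∩ G2 ⊆ {ω | ((1/16 * Real.sqrt m : ℝ) : EReal) *
      zAR (badU m) (0 : Fin m → ℝ) (fun _ => (1 : ℝ)) 0 (badBrand m u ω) ≤
      zAff (badU m) (0 : Fin m → ℝ) (fun _ => (1 : ℝ)) 0 (badBrand m u ω)} := by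
    rintro ω ⟨hω1, hω2⟩
    have hu : ∀ i j, i ≠ j → u i j ω ∈ Set.Icc (0:ℝ) 1 := by
      intro i j hij
      have h1 := Set.mem_iInter.mp hω1 i
      have h2 := Set.mem_iInter.mp h1 j
      exact Set.mem_iInter.mp h2 hij
    have hS : ∀ k, (m:ℝ)/4 ≤ ∑ j ∈ Finset.univ.erase k, u k j ω := by
      intro k
      exact Set.mem_iInter.mp hω2 k
    have hBd : ∀ i, badBrand m u ω i i = 1 := by
      intro i; simp [badBrand]
    have hB0 : ∀ i j, 0 ≤ badBrand m u ω i j := by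
      intro i j
      by_cases hij : i = j
      · simp [badBrand, hij]
      · simp only [badBrand, Matrix.of_apply, if_neg hij]
        exact div_nonneg (hu i j hij).1 hsq0.le
    have hBub : ∀ i j, i ≠ j → badBrand m u ω i j ≤ (Real.sqrt m)⁻¹ := by
      intro i j hij
      simp only [badBrand, Matrix.of_apply, if_neg hij]
      rw [div_eq_mul_inv]
      nth_rewrite 2 [← one_mul (Real.sqrt (m:ℝ))⁻¹]
      exact mul_le_mul_of_nonneg_right (hu i j hij).2 (inv_nonneg.mpr hsq0.le)
    have hrow : ∀ k, Real.sqrt m / 4 ≤ ∑ j ∈ Finset.univ.erase k, badBrand m u ω k j := by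
      intro k
      have he : ∑ j ∈ Finset.univ.erase k, badBrand m u ω k j
          = (∑ j ∈ Finset.univ.erase k, u k j ω) / Real.sqrt m := by
        rw [Finset.sum_div]
        refine Finset.sum_congr rfl fun j hj => ?_
        have hkj : ¬ (k = j) := fun hc => (Finset.mem_erase.mp hj).1 hc.symm
        simp [badBrand, hkj]
      rw [he]
      have h2 : ((m:ℝ)/4) / Real.sqrt m ≤ (∑ j ∈ Finset.univ.erase k, u k j ω) / Real.sqrt m :=
        (div_le_div_iff_of_pos_right hsq0).mpr (hS k)
      refine le_trans (le_of_eq ?_) h2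
      rw [div_div, eq_div_iff (by positivity)]
      nlinarith [Real.mul_self_sqrt hmr.le]
    exact deterministic_bound (by omega) _ hBd hB0 hBub hrow
  -- measurability
  have hG1meas : MeasurableSet G1 :=
    MeasurableSet.iInter fun i => MeasurableSet.iInter fun j =>
      MeasurableSet.iInter fun hij => (hmeas i j hij) measurableSet_Icc
  have hSmeas : ∀ k : Fin m, Measurable fun ω => ∑ j ∈ Finset.univ.erase k, u k j ω :=
    fun k => Finset.measurable_sum _ fun j hj =>
      hmeas k j (Ne.symm (Finset.mem_erase.mp hj).1)
  have hG2meas : MeasurableSet G2 :=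
    MeasurableSet.iInter fun k => measurableSet_le measurable_const (hSmeas k)
  -- probability of the bad event
  have hcompl : Pr (G1 ∩ G2)ᶜ ≤ ENNReal.ofReal (1/m) := by
    rw [Set.compl_inter]
    refine le_trans (measure_union_le _ _) ?_
    have h1 : Pr G1ᶜ = 0 := by
      rw [hG1]
      simp only [Set.compl_iInter]
      refine measure_iUnion_null fun i => measure_iUnion_null fun j =>
        measure_iUnion_null fun hij => ?_
      rw [← Set.preimage_compl,
        ← Measure.map_apply (hmeas i j hij) measurableSet_Icc.compl, hmap i j hij,
        Measure.restrict_apply measurableSet_Icc.compl, Set.compl_inter_self,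
        measure_empty]
    have h2 : Pr G2ᶜ ≤ (m : ENNReal) * ENNReal.ofReal (Real.exp m * (1/4:ℝ)^(m-1)) := by
      rw [hG2]
      simp only [Set.compl_iInter]
      refine le_trans (measure_iUnion_fintype_le _ _) ?_
      have h3 : ∀ k : Fin m, Pr {ω : Ω | (m:ℝ)/4 ≤ ∑ j ∈ Finset.univ.erase k, u k j ω}ᶜ
          ≤ ENNReal.ofReal (Real.exp m * (1/4:ℝ)^(m-1)) := by
        intro k
        refine le_trans (measure_mono ?_) (chernoff_tail Pr u hmeas hindep hmap k)
        intro ω hω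
        simp only [Set.mem_compl_iff, Set.mem_setOf_eq, not_le] at hω
        exact le_of_lt hω
      refine le_trans (Finset.sum_le_sum fun k (_ : k ∈ Finset.univ) => h3 k) ?_
      rw [Finset.sum_const, Finset.card_univ, Fintype.card_fin, nsmul_eq_mul]
    calc Pr G1ᶜ + Pr G2ᶜ ≤ 0 + (m : ENNReal) * ENNReal.ofReal (Real.exp m * (1/4:ℝ)^(m-1)) :=
          add_le_add h1.le h2
      _ = (m : ENNReal) * ENNReal.ofReal (Real.exp m * (1/4:ℝ)^(m-1)) := zero_add _
      _ = ENNReal.ofReal ((m:ℝ) * (Real.exp m * (1/4:ℝ)^(m-1))) := by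
          rw [← ENNReal.ofReal_natCast m, ← ENNReal.ofReal_mul (Nat.cast_nonneg m)]
      _ ≤ ENNReal.ofReal (1/m) := ENNReal.ofReal_le_ofReal (num_bound hm)
  -- conclude
  refine le_trans ?_ (measure_mono hsub)
  have hGmeas := hG1meas.inter hG2meas
  have htot : Pr (G1 ∩ G2) + Pr (G1 ∩ G2)ᶜ = Pr Set.univ := measure_add_measure_compl (μ := Pr) hGmeas
  have hsub1 : (0:ℝ) ≤ 1 - 1/m := by
    rw [sub_nonneg, div_le_one hmr]
    exact_mod_cast hm0
  have hle1 : ENNReal.ofReal (1 - 1/m) + Pr (G1 ∩ G2)ᶜ ≤ Pr (G1 ∩ G2) + Pr (G1 ∩ G2)ᶜ := by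
    rw [htot, measure_univ]
    calc ENNReal.ofReal (1 - 1/m) + Pr (G1 ∩ G2)ᶜ
        ≤ ENNReal.ofReal (1 - 1/m) + ENNReal.ofReal (1/m) := add_le_add_right hcompl _
      _ = ENNReal.ofReal 1 := by
          rw [← ENNReal.ofReal_add hsub1 (by positivity)]
          norm_num
      _ = 1 := ENNReal.ofReal_one
  exact (ENNReal.add_le_add_iff_right (measure_ne_top Pr _)).mp hle1
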